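/- For complex q with |q| < 1, sum_{n=0}^{infinity} [(q;q^2)_n (-q)^n / ((-q;q^2)_n (1+q^{2n}))] * [(-q;q)_{2n} / (q;q)_{2n}] = (1/2) * (q;q^2)_infinity / (-q;q^2)_infinity. -/

import Mathlib

set_option maxHeartbeats 1000000
open Filter Topology Finset


/-- `(A;q)_n` -/
noncomputable def qp (q a : ℂ) (n : ℕ) : ℂ :=
  ∏ k ∈ Finset.range n, (1 - a * q ^ k)

/-- `(A;q)_∞` -/
noncomputable def qpinf (q a : ℂ) : ℂ := ∏' k : ℕ, (1 - a * q ^ k)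

noncomputable def Complex.abs : AbsoluteValue ℂ ℝ :=
  IsAbsoluteValue.toAbsoluteValue (norm : ℂ → ℝ)

lemma Complex.norm_eq_abs (z : ℂ) : ‖z‖ = Complex.abs z := rfl

noncomputable def cs (Q : ℂ) (n : ℕ) : ℂ := qp Q (-1) n / qp Q Q n

lemma qp_succ (q a : ℂ) (n : ℕ) : qp q a (n + 1) = qp q a n * (1 - a * q ^ n) :=
  Finset.prod_range_succ _ n

lemma one_sub_ne {x : ℂ} (h : Complex.abs x < 1) : 1 - x ≠ 0 := by
  intro h0
  rw [sub_eq_zero] at h0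
  rw [← h0] at h
  simp at h

lemma abs_mul_pow_le {Q : ℂ} (a : ℂ) (hQ : Complex.abs Q ≤ 1) (k : ℕ) :
    Complex.abs (a * Q ^ k) ≤ Complex.abs a := by
  rw [map_mul, map_pow]
  exact mul_le_of_le_one_right (Complex.abs.nonneg a) (pow_le_one₀ (Complex.abs.nonneg Q) hQ)

lemma factor_ne {Q a : ℂ} (hQ : Complex.abs Q ≤ 1) (ha : Complex.abs a < 1) (k : ℕ) :
    1 - a * Q ^ k ≠ 0 :=
  one_sub_ne (lt_of_le_of_lt (abs_mul_pow_le a hQ k) ha)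

lemma qp_ne_zero {Q a : ℂ} (hQ : Complex.abs Q ≤ 1) (ha : Complex.abs a < 1) (n : ℕ) :
    qp Q a n ≠ 0 :=
  Finset.prod_ne_zero_iff.2 fun k _ => factor_ne hQ ha k

lemma one_add_pow_ne {Q : ℂ} (hQ : Complex.abs Q < 1) (n : ℕ) : 1 + Q ^ n ≠ 0 := by
  cases n with
  | zero => norm_num
  | succ m =>
    have : Complex.abs (-(Q ^ (m + 1))) < 1 := by
      rw [Complex.abs.map_neg, map_pow]
      exact lt_of_le_of_lt (pow_le_of_le_one (Complex.abs.nonneg Q) hQ.le (Nat.succ_ne_zero m))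
        hQ
    have := one_sub_ne this
    simpa using this

lemma cs_rec {Q : ℂ} (hQ : Complex.abs Q < 1) (n : ℕ) :
    (1 - Q ^ (n + 1)) * cs Q (n + 1) = (1 + Q ^ n) * cs Q n := by
  have hB : qp Q Q n ≠ 0 := qp_ne_zero hQ.le hQ n
  have h1 : (1 : ℂ) - Q * Q ^ n ≠ 0 := factor_ne hQ.le hQ n
  unfold cs
  rw [qp_succ, qp_succ]
  rw [pow_succ']
  field_simp
  ring

lemma cs_abs_ratio {Q : ℂ} (hQ : Complex.abs Q < 1) (n : ℕ) :
    Complex.abs (cs Q (n + 1)) ≤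
      (1 + Complex.abs Q ^ n) / (1 - Complex.abs Q ^ (n + 1)) * Complex.abs (cs Q n) := by
  have h1 : (1 : ℂ) - Q ^ (n + 1) ≠ 0 := by
    rw [pow_succ']; exact factor_ne hQ.le hQ n
  have habs1 : (0 : ℝ) < 1 - Complex.abs Q ^ (n + 1) := by
    have : Complex.abs Q ^ (n + 1) < 1 :=
      pow_lt_one₀ (Complex.abs.nonneg Q) hQ (Nat.succ_ne_zero n)
    linarith
  have hcs : cs Q (n + 1) = (1 + Q ^ n) * cs Q n / (1 - Q ^ (n + 1)) := by
    rw [eq_div_iff h1]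
    rw [mul_comm _ (1 - Q ^ (n + 1))]
    exact cs_rec hQ n
  rw [hcs, map_div₀, map_mul]
  have hnum : Complex.abs (1 + Q ^ n) ≤ 1 + Complex.abs Q ^ n := by
    calc Complex.abs (1 + Q ^ n) ≤ Complex.abs 1 + Complex.abs (Q ^ n) :=
          Complex.abs.add_le _ _
    _ = 1 + Complex.abs Q ^ n := by rw [map_one, map_pow]
  have hden : 1 - Complex.abs Q ^ (n + 1) ≤ Complex.abs (1 - Q ^ (n + 1)) := by
    calc 1 - Complex.abs Q ^ (n + 1) = Complex.abs 1 - Complex.abs (Q ^ (n + 1)) := by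
          rw [map_one, map_pow]
    _ ≤ Complex.abs (1 - Q ^ (n + 1)) := by
          simpa only [Complex.norm_eq_abs] using
            norm_sub_norm_le (1 : ℂ) (Q ^ (n + 1))
  rw [div_mul_eq_mul_div]
  apply div_le_div₀ (by positivity)
  · exact mul_le_mul_of_nonneg_right hnum (Complex.abs.nonneg _)
  · exact habs1
  · exact hden

lemma summable_norm_cs {Q z : ℂ} (hQ : Complex.abs Q < 1) (hz : Complex.abs z < 1) :
    Summable (fun n => ‖cs Q n * z ^ n‖) := by
  set r : ℝ := (1 + Complex.abs z) / 2 with hr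
  have hr1 : r < 1 := by rw [hr]; linarith
  have hzr : Complex.abs z < r := by rw [hr]; linarith
  apply summable_of_ratio_norm_eventually_le hr1
  have htend : Filter.Tendsto
      (fun n : ℕ => (1 + Complex.abs Q ^ n) / (1 - Complex.abs Q ^ (n + 1)) * Complex.abs z)
      Filter.atTop (nhds ((1 + 0) / (1 - 0) * Complex.abs z)) := by
    apply Filter.Tendsto.mul_const
    apply Filter.Tendsto.div
    · exact tendsto_const_nhds.add (tendsto_pow_atTop_nhds_zero_of_lt_one
        (Complex.abs.nonneg Q) hQ)
    · exact tendsto_const_nhds.sub ((tendsto_pow_atTop_nhds_zero_of_lt_one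
        (Complex.abs.nonneg Q) hQ).comp (tendsto_add_atTop_nat 1))
    · norm_num
  simp only [add_zero, sub_zero, div_one, one_mul] at htend
  have hev : ∀ᶠ n : ℕ in Filter.atTop,
      (1 + Complex.abs Q ^ n) / (1 - Complex.abs Q ^ (n + 1)) * Complex.abs z ≤ r :=
    htend.eventually_le_const hzr
  filter_upwards [hev] with n hn
  have habs1 : (0 : ℝ) < 1 - Complex.abs Q ^ (n + 1) := by
    have : Complex.abs Q ^ (n + 1) < 1 :=
      pow_lt_one₀ (Complex.abs.nonneg Q) hQ (Nat.succ_ne_zero n)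
    linarith
  rw [norm_norm, norm_norm]
  calc ‖cs Q (n + 1) * z ^ (n + 1)‖
      = Complex.abs (cs Q (n + 1)) * Complex.abs z ^ (n + 1) := by
        rw [Complex.norm_eq_abs, map_mul, map_pow]
    _ ≤ ((1 + Complex.abs Q ^ n) / (1 - Complex.abs Q ^ (n + 1)) * Complex.abs (cs Q n)) *
          Complex.abs z ^ (n + 1) :=
        mul_le_mul_of_nonneg_right (cs_abs_ratio hQ n) (by positivity)
    _ = ((1 + Complex.abs Q ^ n) / (1 - Complex.abs Q ^ (n + 1)) * Complex.abs z) *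
          (Complex.abs (cs Q n) * Complex.abs z ^ n) := by ring
    _ ≤ r * (Complex.abs (cs Q n) * Complex.abs z ^ n) :=
        mul_le_mul_of_nonneg_right hn (by positivity)
    _ = r * ‖cs Q n * z ^ n‖ := by rw [Complex.norm_eq_abs, map_mul, map_pow]

lemma abs_mul_lt {Q w : ℂ} (hQ : Complex.abs Q ≤ 1) (hw : Complex.abs w < 1) :
    Complex.abs (Q * w) < 1 := by
  rw [map_mul]
  exact lt_of_le_of_lt (mul_le_of_le_one_left (Complex.abs.nonneg w) hQ) hw

lemma func_eq {Q w : ℂ} (hQ : Complex.abs Q < 1) (hw : Complex.abs w < 1) :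
    (1 - w) * ∑' n, cs Q n * w ^ n = (1 + w) * ∑' n, cs Q n * (Q * w) ^ n := by
  have hA : Summable (fun n => cs Q n * w ^ n) := (summable_norm_cs hQ hw).of_norm
  have hB : Summable (fun n => cs Q n * (Q * w) ^ n) :=
    (summable_norm_cs hQ (abs_mul_lt hQ.le hw)).of_norm
  have key : ∑' n, (cs Q n * w ^ n - cs Q n * (Q * w) ^ n) =
      ∑' n, (cs Q n * w ^ n * w + cs Q n * (Q * w) ^ n * w) := by
    rw [Summable.tsum_eq_zero_add (hA.sub hB)]
    simp only [pow_zero, mul_one, sub_self, zero_add]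
    apply tsum_congr
    intro n
    linear_combination (w ^ (n + 1)) * cs_rec hQ n
  have h1 : ∑' n, (cs Q n * w ^ n - cs Q n * (Q * w) ^ n) =
      (∑' n, cs Q n * w ^ n) - ∑' n, cs Q n * (Q * w) ^ n := Summable.tsum_sub hA hB
  have h2 : ∑' n, (cs Q n * w ^ n * w + cs Q n * (Q * w) ^ n * w) =
      (∑' n, cs Q n * w ^ n) * w + (∑' n, cs Q n * (Q * w) ^ n) * w := by
    rw [Summable.tsum_add (hA.mul_right w) (hB.mul_right w), tsum_mul_right, tsum_mul_right]
  rw [h1, h2] at key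
  linear_combination key

lemma telescope {Q z : ℂ} (hQ : Complex.abs Q < 1) (hz : Complex.abs z < 1) (N : ℕ) :
    (∑' n, cs Q n * z ^ n) * qp Q z N =
      qp Q (-z) N * ∑' n, cs Q n * (Q ^ N * z) ^ n := by
  induction N with
  | zero => simp [qp]
  | succ N ih =>
    have hQN : Complex.abs (Q ^ N) ≤ 1 := by
      rw [map_pow]; exact pow_le_one₀ (Complex.abs.nonneg Q) hQ.le
    have hw : Complex.abs (Q ^ N * z) < 1 := abs_mul_lt hQN hz
    have hfe := func_eq hQ hw
    rw [show Q * (Q ^ N * z) = Q ^ (N + 1) * z by ring] at hfe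
    rw [qp_succ, qp_succ]
    linear_combination (1 - z * Q ^ N) * ih + qp Q (-z) N * hfe

lemma log_summable {Q a : ℂ} (hQ : Complex.abs Q < 1) (ha : Complex.abs a < 1) :
    Summable (fun k => Complex.log (1 - a * Q ^ k)) := by
  apply Summable.of_norm_bounded_eventually
    (g := fun k => 3 / 2 * (Complex.abs a * Complex.abs Q ^ k))
  · exact ((summable_geometric_of_lt_one (Complex.abs.nonneg Q) hQ).mul_left
      (Complex.abs a)).mul_left _
  · rw [Nat.cofinite_eq_atTop]
    have htend : Filter.Tendsto (fun k : ℕ => Complex.abs a * Complex.abs Q ^ k)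
        Filter.atTop (nhds 0) := by
      simpa using (tendsto_pow_atTop_nhds_zero_of_lt_one (Complex.abs.nonneg Q) hQ).const_mul
        (Complex.abs a)
    filter_upwards [htend.eventually_le_const (by norm_num : (0:ℝ) < 1/2)] with k hk
    have hle : ‖-(a * Q ^ k)‖ ≤ 1 / 2 := by
      rw [norm_neg, Complex.norm_eq_abs, map_mul, map_pow]
      exact hk
    calc ‖Complex.log (1 - a * Q ^ k)‖ = ‖Complex.log (1 + -(a * Q ^ k))‖ := by
          rw [sub_eq_add_neg]
      _ ≤ 3 / 2 * ‖-(a * Q ^ k)‖ := Complex.norm_log_one_add_half_le_self hle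
      _ ≤ 3 / 2 * (Complex.abs a * Complex.abs Q ^ k) := by
          rw [norm_neg, Complex.norm_eq_abs, map_mul, map_pow]

lemma multipliable_qp {Q a : ℂ} (hQ : Complex.abs Q < 1) (ha : Complex.abs a < 1) :
    Multipliable (fun k : ℕ => 1 - a * Q ^ k) :=
  Complex.multipliable_of_summable_log (log_summable hQ ha)

lemma tendsto_qp {Q a : ℂ} (hQ : Complex.abs Q < 1) (ha : Complex.abs a < 1) :
    Filter.Tendsto (fun N => qp Q a N) Filter.atTop (nhds (qpinf Q a)) :=
  Multipliable.tendsto_prod_tprod_nat (multipliable_qp hQ ha)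

lemma qpinf_ne_zero {Q a : ℂ} (hQ : Complex.abs Q < 1) (ha : Complex.abs a < 1) :
    qpinf Q a ≠ 0 := by
  have h := Complex.cexp_tsum_eq_tprod (f := fun k => 1 - a * Q ^ k)
    (fun k => factor_ne hQ.le ha k) (log_summable hQ ha)
  rw [show qpinf Q a = ∏' k : ℕ, (1 - a * Q ^ k) from rfl, ← h]
  exact Complex.exp_ne_zero _

lemma cs_zero (Q : ℂ) : cs Q 0 = 1 := by simp [cs, qp]

lemma F_tendsto_one {Q z : ℂ} (hQ : Complex.abs Q < 1) (hz : Complex.abs z < 1) :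
    Filter.Tendsto (fun N : ℕ => ∑' n, cs Q n * (Q ^ N * z) ^ n) Filter.atTop (nhds 1) := by
  rw [tendsto_iff_norm_sub_tendsto_zero]
  set C : ℝ := ∑' n, ‖cs Q (n + 1) * z ^ (n + 1)‖ with hC
  have hCsum : Summable (fun n => ‖cs Q (n + 1) * z ^ (n + 1)‖) :=
    (summable_nat_add_iff 1).2 (summable_norm_cs hQ hz)
  have bound : ∀ N : ℕ, ‖(∑' n, cs Q n * (Q ^ N * z) ^ n) - 1‖ ≤ C * Complex.abs Q ^ N := by
    intro N
    have hQN : Complex.abs (Q ^ N) ≤ 1 := by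
      rw [map_pow]; exact pow_le_one₀ (Complex.abs.nonneg Q) hQ.le
    have hw : Complex.abs (Q ^ N * z) < 1 := abs_mul_lt hQN hz
    have hsum : Summable (fun n => cs Q n * (Q ^ N * z) ^ n) :=
      (summable_norm_cs hQ hw).of_norm
    have hnorm : Summable (fun n => ‖cs Q (n + 1) * (Q ^ N * z) ^ (n + 1)‖) :=
      (summable_nat_add_iff 1).2 (summable_norm_cs hQ hw)
    have h0 : (∑' n, cs Q n * (Q ^ N * z) ^ n) - 1 =
        ∑' n, cs Q (n + 1) * (Q ^ N * z) ^ (n + 1) := by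
      rw [Summable.tsum_eq_zero_add hsum, cs_zero]
      ring
    rw [h0]
    calc ‖∑' n, cs Q (n + 1) * (Q ^ N * z) ^ (n + 1)‖
        ≤ ∑' n, ‖cs Q (n + 1) * (Q ^ N * z) ^ (n + 1)‖ := norm_tsum_le_tsum_norm hnorm
      _ ≤ ∑' n, Complex.abs Q ^ N * ‖cs Q (n + 1) * z ^ (n + 1)‖ := by
          apply Summable.tsum_le_tsum _ hnorm (hCsum.mul_left _)
          intro n
          have heq : ‖cs Q (n + 1) * (Q ^ N * z) ^ (n + 1)‖ =
              (Complex.abs Q ^ N) ^ (n + 1) * ‖cs Q (n + 1) * z ^ (n + 1)‖ := by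
            rw [Complex.norm_eq_abs, Complex.norm_eq_abs, mul_pow]
            simp only [map_mul, map_pow]
            ring
          rw [heq]
          apply mul_le_mul_of_nonneg_right _ (norm_nonneg _)
          exact pow_le_of_le_one (by positivity)
            (pow_le_one₀ (Complex.abs.nonneg Q) hQ.le) (Nat.succ_ne_zero n)
      _ = C * Complex.abs Q ^ N := by rw [tsum_mul_left, mul_comm]
  apply squeeze_zero (fun N => norm_nonneg _) bound
  simpa using (tendsto_pow_atTop_nhds_zero_of_lt_one (Complex.abs.nonneg Q) hQ).const_mul C

lemma qbinom {Q z : ℂ} (hQ : Complex.abs Q < 1) (hz : Complex.abs z < 1) :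
    (∑' n, cs Q n * z ^ n) * qpinf Q z = qpinf Q (-z) := by
  have hz' : Complex.abs (-z) < 1 := by rwa [Complex.abs.map_neg]
  have h1 : Filter.Tendsto (fun N => (∑' n, cs Q n * z ^ n) * qp Q z N) Filter.atTop
      (nhds ((∑' n, cs Q n * z ^ n) * qpinf Q z)) := (tendsto_qp hQ hz).const_mul _
  have h2 : Filter.Tendsto (fun N => qp Q (-z) N * ∑' n, cs Q n * (Q ^ N * z) ^ n)
      Filter.atTop (nhds (qpinf Q (-z) * 1)) :=
    (tendsto_qp hQ hz').mul (F_tendsto_one hQ hz)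
  rw [mul_one] at h2
  exact tendsto_nhds_unique (h1.congr (telescope hQ hz)) h2

lemma qp_two_mul (q a : ℂ) (n : ℕ) :
    qp q a (2 * n) = qp (q ^ 2) a n * qp (q ^ 2) (a * q) n := by
  induction n with
  | zero => simp [qp]
  | succ n ih =>
    rw [show 2 * (n + 1) = 2 * n + 1 + 1 by ring, qp_succ, qp_succ, qp_succ, qp_succ, ih]
    ring

lemma qp_neg_one (Q : ℂ) (n : ℕ) : qp Q (-1) n * (1 + Q ^ n) = 2 * qp Q (-Q) n := by
  induction n with
  | zero => norm_num [qp]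
  | succ n ih =>
    rw [qp_succ, qp_succ]
    linear_combination (1 + Q ^ (n + 1)) * ih

theorem A_q_eval (q : ℂ) (hq : ‖q‖ < 1) :
    ∑' n : ℕ, qp (q ^ 2) q n * (-q) ^ n / (qp (q ^ 2) (-q) n * (1 + q ^ (2 * n))) *
        (qp q (-q) (2 * n) / qp q q (2 * n)) =
      (1 / 2) * qpinf (q ^ 2) q / qpinf (q ^ 2) (-q) := by
  have hQ : Complex.abs (q ^ 2) < 1 := by
    rw [map_pow]; exact pow_lt_one₀ (Complex.abs.nonneg q) hq two_ne_zero
  have hz : Complex.abs (-q) < 1 := by rwa [Complex.abs.map_neg]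
  have key : ∀ n : ℕ,
      qp (q ^ 2) q n * (-q) ^ n / (qp (q ^ 2) (-q) n * (1 + q ^ (2 * n))) *
        (qp q (-q) (2 * n) / qp q q (2 * n)) = 1 / 2 * (cs (q ^ 2) n * (-q) ^ n) := by
    intro n
    have e1 : qp q (-q) (2 * n) = qp (q ^ 2) (-q) n * qp (q ^ 2) (-(q ^ 2)) n := by
      rw [qp_two_mul, show -q * q = -(q ^ 2) by ring]
    have e2 : qp q q (2 * n) = qp (q ^ 2) q n * qp (q ^ 2) (q ^ 2) n := by
      rw [qp_two_mul, show q * q = q ^ 2 by ring]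
    have e3 : q ^ (2 * n) = (q ^ 2) ^ n := by rw [pow_mul]
    have hA : qp (q ^ 2) q n ≠ 0 := qp_ne_zero hQ.le hq n
    have hB : qp (q ^ 2) (-q) n ≠ 0 := qp_ne_zero hQ.le hz n
    have hC : qp (q ^ 2) (q ^ 2) n ≠ 0 := qp_ne_zero hQ.le hQ n
    have hD : (1 : ℂ) + (q ^ 2) ^ n ≠ 0 := one_add_pow_ne hQ n
    have e4 : qp (q ^ 2) (-(q ^ 2)) n = qp (q ^ 2) (-1) n * (1 + (q ^ 2) ^ n) / 2 := by
      rw [eq_div_iff (two_ne_zero)]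
      linear_combination -qp_neg_one (q ^ 2) n
    rw [e1, e2, e3, cs, e4]
    field_simp
  rw [tsum_congr key, tsum_mul_left]
  have hbin := qbinom hQ hz
  rw [neg_neg] at hbin
  have hne : qpinf (q ^ 2) (-q) ≠ 0 := qpinf_ne_zero hQ hz
  rw [show (∑' n, cs (q ^ 2) n * (-q) ^ n) = qpinf (q ^ 2) q / qpinf (q ^ 2) (-q) from
    by rw [eq_div_iff hne]; exact hbin]
  ring
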